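/- For every real v > 1/2 and every tie-breaking rule, the AND–OR game has no pure Nash equilibrium: there is no pair of bids a ∈ [0,H]×[0,H] and b ∈ [0,H]×[0,H] such that u_and(a', b) ≤ u_and(a, b) for all a' ∈ [0,H]×[0,H] and u_or(a, b') ≤ u_or(a, b) for all b' ∈ [0,H]×[0,H]. -/

import Mathlib

open MeasureTheory Set
open scoped ENNReal

noncomputable section

/-- A bid profile for one player: a bid on each of the two items. -/
abbrev Bid := ℝ × ℝ

/-- The maximum allowed bid `H = max 1 v`. -/
def Hval (v : ℝ) : ℝ := max 1 v

/-- The set of allowed bids `[0,H] × [0,H]`. -/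
def box (v : ℝ) : Set Bid := Icc (0:ℝ) (Hval v) ×ˢ Icc (0:ℝ) (Hval v)

/-- A tie-breaking rule: measurable functions `t₁ t₂ : ℝ → [0,1]`, where `tᵢ x` is the
probability that AND wins item `i` when both players bid `x` on it. -/
structure TieRule where
  t1 : ℝ → ℝ
  t2 : ℝ → ℝ
  meas1 : Measurable t1
  meas2 : Measurable t2
  t1_nonneg : ∀ x, 0 ≤ t1 x
  t1_le_one : ∀ x, t1 x ≤ 1
  t2_nonneg : ∀ x, 0 ≤ t2 x
  t2_le_one : ∀ x, t2 x ≤ 1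

/-- Probability that AND wins item 1 with bids `a` (AND) and `b` (OR). -/
def q1 (T : TieRule) (a b : Bid) : ℝ :=
  if b.1 < a.1 then 1 else if a.1 = b.1 then T.t1 a.1 else 0

/-- Probability that AND wins item 2 with bids `a` (AND) and `b` (OR). -/
def q2 (T : TieRule) (a b : Bid) : ℝ :=
  if b.2 < a.2 then 1 else if a.2 = b.2 then T.t2 a.2 else 0

/-- Expected utility of the AND player at the pure profile `(a,b)`. -/
def uAnd (T : TieRule) (a b : Bid) : ℝ :=
  q1 T a b * q2 T a b - a.1 * q1 T a b - a.2 * q2 T a b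

/-- Expected utility of the OR player at the pure profile `(a,b)`. -/
def uOr (v : ℝ) (T : TieRule) (a b : Bid) : ℝ :=
  v * (1 - q1 T a b * q2 T a b) - b.1 * (1 - q1 T a b) - b.2 * (1 - q2 T a b)

/-- A mixed strategy: a Borel probability measure on `ℝ × ℝ` supported in the box. -/
def IsMixed (v : ℝ) (μ : Measure Bid) : Prop :=
  IsProbabilityMeasure μ ∧ μ (box v) = 1

/-- Expected utility of AND under mixed strategies. -/
def UAnd (T : TieRule) (μ ν : Measure Bid) : ℝ :=
  ∫ p, uAnd T p.1 p.2 ∂(μ.prod ν)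

/-- Expected utility of OR under mixed strategies. -/
def UOr (v : ℝ) (T : TieRule) (μ ν : Measure Bid) : ℝ :=
  ∫ p, uOr v T p.1 p.2 ∂(μ.prod ν)

/-- `(μ,ν)` is a mixed Nash equilibrium of the AND–OR game. -/
def IsNash (v : ℝ) (T : TieRule) (μ ν : Measure Bid) : Prop :=
  IsMixed v μ ∧ IsMixed v ν ∧
  (∀ a ∈ box v, (∫ b, uAnd T a b ∂ν) ≤ UAnd T μ ν) ∧
  (∀ b ∈ box v, (∫ a, uOr v T a b ∂μ) ≤ UOr v T μ ν)

/-- The uniform probability measure on `[0,1] ⊆ ℝ`. -/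
def P01 : Measure ℝ := volume.restrict (Icc (0:ℝ) 1)

/-- The OR equilibrium strategy `ν*`: bid `(x,0)` or `(0,x)` with probability `1/2` each,
where `x ∈ [0,1/2]` has CDF `x/(1-x)`. -/
def nuStar : Measure Bid :=
  (1/2 : ℝ≥0∞) • Measure.map (fun u => (u/(1+u), (0:ℝ))) P01 +
  (1/2 : ℝ≥0∞) • Measure.map (fun u => ((0:ℝ), u/(1+u))) P01

/-- Inverse-CDF map for the AND equilibrium bid distribution. -/
def gAnd (v u : ℝ) : ℝ := if 0 < u then max 0 (v - (v - 1/2)/u) else 0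

/-- The AND equilibrium strategy `μ*`: bid `(y,y)` where `y ∈ [0,1/2]` has CDF
`(v-1/2)/(v-y)`, with an atom of mass `1 - 1/(2v)` at `0`. -/
def muStar (v : ℝ) : Measure Bid := Measure.map (fun u => (gAnd v u, gAnd v u)) P01


/-! ### Auxiliary lemmas -/

lemma q1_lt (T : TieRule) {a b : Bid} (h : b.1 < a.1) : q1 T a b = 1 := if_pos h

lemma q1_gt (T : TieRule) {a b : Bid} (h : a.1 < b.1) : q1 T a b = 0 := by
  unfold q1; rw [if_neg (not_lt.2 h.le), if_neg h.ne]

lemma q1_eq' (T : TieRule) {a b : Bid} (h : a.1 = b.1) : q1 T a b = T.t1 a.1 := by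
  unfold q1; rw [if_neg (not_lt.2 h.le), if_pos h]

lemma q2_lt (T : TieRule) {a b : Bid} (h : b.2 < a.2) : q2 T a b = 1 := if_pos h

lemma q2_gt (T : TieRule) {a b : Bid} (h : a.2 < b.2) : q2 T a b = 0 := by
  unfold q2; rw [if_neg (not_lt.2 h.le), if_neg h.ne]

lemma q2_eq' (T : TieRule) {a b : Bid} (h : a.2 = b.2) : q2 T a b = T.t2 a.2 := by
  unfold q2; rw [if_neg (not_lt.2 h.le), if_pos h]

lemma q1_nonneg (T : TieRule) (a b : Bid) : 0 ≤ q1 T a b := by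
  unfold q1; split_ifs
  · norm_num
  · exact T.t1_nonneg _
  · norm_num

lemma q1_le_one (T : TieRule) (a b : Bid) : q1 T a b ≤ 1 := by
  unfold q1; split_ifs
  · norm_num
  · exact T.t1_le_one _
  · norm_num

lemma q2_nonneg (T : TieRule) (a b : Bid) : 0 ≤ q2 T a b := by
  unfold q2; split_ifs
  · norm_num
  · exact T.t2_nonneg _
  · norm_num

lemma q2_le_one (T : TieRule) (a b : Bid) : q2 T a b ≤ 1 := by
  unfold q2; split_ifs
  · norm_num
  · exact T.t2_le_one _
  · norm_num

lemma mem_box {v x y : ℝ} (h1 : 0 ≤ x) (h2 : x ≤ Hval v) (h3 : 0 ≤ y)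
    (h4 : y ≤ Hval v) : ((x, y) : Bid) ∈ box v := by
  simp only [box, Set.mem_prod, Set.mem_Icc]
  exact ⟨⟨h1, h2⟩, ⟨h3, h4⟩⟩

lemma eps_le {X δ : ℝ} (hδ : 0 < δ) (h : ∀ ε : ℝ, 0 < ε → ε ≤ δ → X ≤ ε) : X ≤ 0 := by
  by_contra hX
  push_neg at hX
  have h2 := h (min δ (X / 2)) (lt_min hδ (by linarith)) (min_le_left _ _)
  have h3 := min_le_right δ (X / 2)
  linarith

set_option maxHeartbeats 4000000 in
/-- For every `v > 1/2` and every tie-breaking rule, the AND–OR game has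
no pure Nash equilibrium. -/
theorem no_pure_nash (v : ℝ) (hv : 1/2 < v) (T : TieRule) :
    ¬ ∃ a ∈ box v, ∃ b ∈ box v,
        (∀ a' ∈ box v, uAnd T a' b ≤ uAnd T a b) ∧
        (∀ b' ∈ box v, uOr v T a b' ≤ uOr v T a b) := by
  rintro ⟨a, ha, b, hb, hA, hO⟩
  have hH1 : (1:ℝ) ≤ Hval v := le_max_left _ _
  have hHv : v ≤ Hval v := le_max_right _ _
  have hH0 : (0:ℝ) < Hval v := by linarith
  simp only [box, Set.mem_prod, Set.mem_Icc] at ha hb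
  obtain ⟨⟨ha10, ha1H⟩, ha20, ha2H⟩ := ha
  obtain ⟨⟨hb10, hb1H⟩, hb20, hb2H⟩ := hb
  -- Step 1: at equilibrium, the bids on each item coincide.
  have hab1 : a.1 = b.1 := by
    rcases lt_trichotomy a.1 b.1 with h | h | h
    · -- OR undercuts its winning bid on item 1
      have hm := hO ((a.1 + b.1) / 2, b.2)
        (mem_box (by linarith) (by linarith) hb20 hb2H)
      have e1 : q1 T a ((a.1 + b.1) / 2, b.2) = 0 := q1_gt T (by simpa using by linarith)
      have e2 : q2 T a ((a.1 + b.1) / 2, b.2) = q2 T a b := rfl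
      have e3 : q1 T a b = 0 := q1_gt T h
      simp only [uOr, e1, e2, e3] at hm
      exfalso; linarith [hm]
    · exact h
    · -- AND undercuts its winning bid on item 1
      have hm := hA ((a.1 + b.1) / 2, a.2)
        (mem_box (by linarith) (by linarith) ha20 ha2H)
      have e1 : q1 T ((a.1 + b.1) / 2, a.2) b = 1 := q1_lt T (by simpa using by linarith)
      have e2 : q2 T ((a.1 + b.1) / 2, a.2) b = q2 T a b := rfl
      have e3 : q1 T a b = 1 := q1_lt T h
      simp only [uAnd, e1, e2, e3] at hm
      exfalso; linarith [hm]
  have hab2 : a.2 = b.2 := by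
    rcases lt_trichotomy a.2 b.2 with h | h | h
    · have hm := hO (b.1, (a.2 + b.2) / 2)
        (mem_box hb10 hb1H (by linarith) (by linarith))
      have e1 : q2 T a (b.1, (a.2 + b.2) / 2) = 0 := q2_gt T (by simpa using by linarith)
      have e2 : q1 T a (b.1, (a.2 + b.2) / 2) = q1 T a b := rfl
      have e3 : q2 T a b = 0 := q2_gt T h
      simp only [uOr, e1, e2, e3] at hm
      exfalso; linarith [hm]
    · exact h
    · have hm := hA (a.1, (a.2 + b.2) / 2)
        (mem_box ha10 ha1H (by linarith) (by linarith))
      have e1 : q2 T (a.1, (a.2 + b.2) / 2) b = 1 := q2_lt T (by simpa using by linarith)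
      have e2 : q1 T (a.1, (a.2 + b.2) / 2) b = q1 T a b := rfl
      have e3 : q2 T a b = 1 := q2_lt T h
      simp only [uAnd, e1, e2, e3] at hm
      exfalso; linarith [hm]
  -- Notation: bids are (p,s) for both players; tie probabilities τ1, τ2.
  set p := a.1 with hp
  set s := a.2 with hs
  set τ1 := T.t1 a.1 with hτ1def
  set τ2 := T.t2 a.2 with hτ2def
  have ht10 : 0 ≤ τ1 := T.t1_nonneg _
  have ht11 : τ1 ≤ 1 := T.t1_le_one _
  have ht20 : 0 ≤ τ2 := T.t2_nonneg _
  have ht21 : τ2 ≤ 1 := T.t2_le_one _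
  have Eq1 : q1 T a b = τ1 := q1_eq' T hab1
  have Eq2 : q2 T a b = τ2 := q2_eq' T hab2
  have Eand : uAnd T a b = τ1 * τ2 - p * τ1 - s * τ2 := by
    simp only [uAnd, Eq1, Eq2]; rfl
  have Eor : uOr v T a b = v * (1 - τ1 * τ2) - p * (1 - τ1) - s * (1 - τ2) := by
    simp only [uOr, Eq1, Eq2, ← hab1, ← hab2]
  -- Deviation D0: AND bids (0,0), so uAnd ≥ 0.
  have D0 : 0 ≤ uAnd T a b := by
    have hm := hA ((0:ℝ), (0:ℝ)) (mem_box le_rfl hH0.le le_rfl hH0.le)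
    have h1 := q1_nonneg T ((0:ℝ), (0:ℝ)) b
    have h2 := q2_nonneg T ((0:ℝ), (0:ℝ)) b
    simp only [uAnd, Eq1, Eq2, ← hab1, ← hab2] at hm
    rw [Eand]
    linarith [hm, mul_nonneg h1 h2]
  -- Deviation D0': OR bids (0,0), so uOr ≥ 0.
  have D0' : 0 ≤ uOr v T a b := by
    have hm := hO ((0:ℝ), (0:ℝ)) (mem_box le_rfl hH0.le le_rfl hH0.le)
    have h1 := q1_nonneg T a ((0:ℝ), (0:ℝ))
    have h2 := q2_nonneg T a ((0:ℝ), (0:ℝ))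
    have h3 := q1_le_one T a ((0:ℝ), (0:ℝ))
    have h4 := q2_le_one T a ((0:ℝ), (0:ℝ))
    have h5 : q1 T a ((0:ℝ), (0:ℝ)) * q2 T a ((0:ℝ), (0:ℝ)) ≤ 1 := mul_le_one₀ h3 h2 h4
    have h6 : 0 ≤ v * (1 - q1 T a ((0:ℝ), (0:ℝ)) * q2 T a ((0:ℝ), (0:ℝ))) :=
      mul_nonneg (by linarith) (by linarith)
    simp only [uOr, Eq1, Eq2, ← hab1, ← hab2] at hm
    rw [Eor]
    linarith [hm, h6]
  -- Deviation D2: OR bids (x,0) with x > p, winning item 1 for sure: uOr ≥ v - x.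
  have D2 : ∀ x : ℝ, p < x → x ≤ Hval v → v - x ≤ uOr v T a b := by
    intro x hx1 hx2
    have hm := hO (x, (0:ℝ)) (mem_box (le_trans ha10 hx1.le) hx2 le_rfl hH0.le)
    have e1 : q1 T a (x, (0:ℝ)) = 0 := q1_gt T hx1
    simp only [uOr, e1, Eq1, Eq2, ← hab1, ← hab2] at hm
    rw [Eor]
    linarith [hm]
  -- Deviation D3: OR bids (0,y) with y > s: uOr ≥ v - y.
  have D3 : ∀ y : ℝ, s < y → y ≤ Hval v → v - y ≤ uOr v T a b := by
    intro y hy1 hy2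
    have hm := hO ((0:ℝ), y) (mem_box le_rfl hH0.le (le_trans ha20 hy1.le) hy2)
    have e1 : q2 T a ((0:ℝ), y) = 0 := q2_gt T hy1
    simp only [uOr, e1, Eq1, Eq2, ← hab1, ← hab2] at hm
    rw [Eor]
    linarith [hm]
  -- Deviation D4: OR bids (x,s) with x > p: uOr ≥ v - x - s*(1-τ2).
  have D4 : ∀ x : ℝ, p < x → x ≤ Hval v → v - x - s * (1 - τ2) ≤ uOr v T a b := by
    intro x hx1 hx2
    have hm := hO (x, a.2) (mem_box (le_trans ha10 hx1.le) hx2 ha20 ha2H)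
    have e1 : q1 T a (x, a.2) = 0 := q1_gt T hx1
    have e2 : q2 T a (x, a.2) = τ2 := q2_eq' T rfl
    simp only [uOr, e1, e2, Eq1, Eq2, ← hab1, ← hab2] at hm
    rw [Eor]
    linarith [hm]
  -- Deviation D5: OR bids (p,y) with y > s: uOr ≥ v - y - p*(1-τ1).
  have D5 : ∀ y : ℝ, s < y → y ≤ Hval v → v - y - p * (1 - τ1) ≤ uOr v T a b := by
    intro y hy1 hy2
    have hm := hO (a.1, y) (mem_box ha10 ha1H (le_trans ha20 hy1.le) hy2)
    have e1 : q2 T a (a.1, y) = 0 := q2_gt T hy1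
    have e2 : q1 T a (a.1, y) = τ1 := q1_eq' T rfl
    simp only [uOr, e1, e2, Eq1, Eq2, ← hab1, ← hab2] at hm
    rw [Eor]
    linarith [hm]
  -- Deviation D6: AND bids (x,y) with x > p, y > s, winning both: uAnd ≥ 1 - x - y.
  have D6 : ∀ x y : ℝ, p < x → x ≤ Hval v → s < y → y ≤ Hval v →
      1 - x - y ≤ uAnd T a b := by
    intro x y hx1 hx2 hy1 hy2
    have hm := hA (x, y) (mem_box (le_trans ha10 hx1.le) hx2 (le_trans ha20 hy1.le) hy2)
    have e1 : q1 T (x, y) b = 1 := q1_lt T (by rw [← hab1]; exact hx1)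
    have e2 : q2 T (x, y) b = 1 := q2_lt T (by rw [← hab2]; exact hy1)
    simp only [uAnd, e1, e2, Eq1, Eq2, ← hab1, ← hab2] at hm
    rw [Eand]
    linarith [hm]
  -- Main case analysis on the tie probabilities.
  rcases eq_or_lt_of_le ht10 with hτ1 | hτ1
  · -- Case τ1 = 0
    have hst : s * τ2 = 0 := by
      have h1 := D0
      rw [Eand, ← hτ1] at h1
      nlinarith [mul_nonneg ha20 ht20]
    have hEor : uOr v T a b = v - p - s := by
      rw [Eor, ← hτ1]
      linear_combination hst
    by_cases hpH : p < Hval v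
    · have hs0 : s = 0 := by
        have h1 : s ≤ 0 := eps_le (by linarith : (0:ℝ) < Hval v - p) (by
          intro ε hε1 hε2
          have := D2 (p + ε) (by linarith) (by linarith)
          rw [hEor] at this
          linarith)
        linarith
      have hp0 : p = 0 := by
        have h1 : p ≤ 0 := eps_le hH0 (by
          intro ε hε1 hε2
          have := D3 ε (by rw [hs0]; exact hε1) hε2
          rw [hEor, hs0] at this
          linarith)
        linarith
      have := D6 (1/4) (1/4) (by rw [hp0]; norm_num) (by linarith)
        (by rw [hs0]; norm_num) (by linarith)
      rw [Eand, ← hτ1] at this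
      nlinarith [this, hst]
    · have hpH' : p = Hval v := le_antisymm ha1H (not_lt.1 hpH)
      have h1 := D0'
      rw [hEor, hpH'] at h1
      have := D3 (1/2) (by linarith) (by linarith)
      rw [hEor, hpH'] at this
      linarith
  · rcases eq_or_lt_of_le ht20 with hτ2 | hτ2
    · -- Case τ2 = 0 (and τ1 > 0)
      have hpt : p * τ1 = 0 := by
        have h1 := D0
        rw [Eand, ← hτ2] at h1
        nlinarith [mul_nonneg ha10 ht10]
      have hEor : uOr v T a b = v - p - s := by
        rw [Eor, ← hτ2]
        linear_combination hpt
      by_cases hsH : s < Hval v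
      · have hp0 : p = 0 := by
          have h1 : p ≤ 0 := eps_le (by linarith : (0:ℝ) < Hval v - s) (by
            intro ε hε1 hε2
            have := D3 (s + ε) (by linarith) (by linarith)
            rw [hEor] at this
            linarith)
          linarith
        have hs0 : s = 0 := by
          have h1 : s ≤ 0 := eps_le hH0 (by
            intro ε hε1 hε2
            have := D2 ε (by rw [hp0]; exact hε1) hε2
            rw [hEor, hp0] at this
            linarith)
          linarith
        have := D6 (1/4) (1/4) (by rw [hp0]; norm_num) (by linarith)
          (by rw [hs0]; norm_num) (by linarith)
        rw [Eand, ← hτ2] at this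
        nlinarith [this, hpt]
      · have hsH' : s = Hval v := le_antisymm ha2H (not_lt.1 hsH)
        have h1 := D0'
        rw [hEor, hsH'] at h1
        have := D2 (1/2) (by linarith) (by linarith)
        rw [hEor, hsH'] at this
        linarith
    · -- Case τ1 > 0 and τ2 > 0
      have hpτ : v * τ2 ≤ p := by
        by_cases hvp : v ≤ p
        · nlinarith [mul_le_mul_of_nonneg_left ht21 (by linarith : (0:ℝ) ≤ v)]
        · push_neg at hvp
          have key : v * τ1 * τ2 - p * τ1 ≤ 0 := eps_le
            (by linarith : (0:ℝ) < Hval v - p) (by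
              intro ε hε1 hε2
              have := D4 (p + ε) (by linarith) (by linarith)
              rw [Eor] at this
              linarith)
          have key2 : v * τ2 * τ1 ≤ p * τ1 := by linarith [key, (by ring : v * τ1 * τ2 = v * τ2 * τ1)]
          exact le_of_mul_le_mul_right key2 hτ1
      have hsτ : v * τ1 ≤ s := by
        by_cases hvs : v ≤ s
        · nlinarith [mul_le_mul_of_nonneg_left ht11 (by linarith : (0:ℝ) ≤ v)]
        · push_neg at hvs
          have key : v * τ1 * τ2 - s * τ2 ≤ 0 := eps_le
            (by linarith : (0:ℝ) < Hval v - s) (by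
              intro ε hε1 hε2
              have := D5 (s + ε) (by linarith) (by linarith)
              rw [Eor] at this
              linarith)
          have key2 : v * τ1 * τ2 ≤ s * τ2 := by linarith [key]
          exact le_of_mul_le_mul_right key2 hτ2
      have h1 := D0
      rw [Eand] at h1
      nlinarith [h1, mul_pos hτ1 hτ2, mul_le_mul_of_nonneg_right hpτ ht10,
        mul_le_mul_of_nonneg_right hsτ ht20]
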